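/- Let n ≥ 3 and k ≥ 1 be integers, let τ be an integer with 0 ≤ τ ≤ n², and set σ = n² − τ. Assume kn ≤ σ ≤ (k+1)n, that (k+1) divides σ − kn, and that k divides (k+1)n − σ. Then μ(n,τ) = ((k+1)!)^{(σ−kn)/(k+1)} · (k!)^{((k+1)n−σ)/k}. -/

import Mathlib

open scoped BigOperators

namespace BGM

/-- The permanent of a square matrix with natural number entries. -/
def perm {n : ℕ} (M : Matrix (Fin n) (Fin n) ℕ) : ℕ :=
  ∑ φ : Equiv.Perm (Fin n), ∏ i, M i (φ i)

/-- `M` is a (0,1)-matrix. -/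
def IsZeroOne {n : ℕ} (M : Matrix (Fin n) (Fin n) ℕ) : Prop :=
  ∀ i j, M i j = 0 ∨ M i j = 1

/-- The number of entries of `M` equal to `0`. -/
def zeroCount {n : ℕ} (M : Matrix (Fin n) (Fin n) ℕ) : ℕ :=
  (Finset.univ.filter fun p : Fin n × Fin n => M p.1 p.2 = 0).card

/-- `𝒰(n, τ)`: the n×n (0,1)-matrices with exactly τ zero entries. -/
def Uclass (n τ : ℕ) : Set (Matrix (Fin n) (Fin n) ℕ) :=
  {M | IsZeroOne M ∧ zeroCount M = τ}

/-- `μ(n, τ) = max {per A : A ∈ 𝒰(n, τ)}`. -/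
noncomputable def mu (n τ : ℕ) : ℕ :=
  sSup (perm '' Uclass n τ)

/-- `𝒜(n, k)`: the n×n (0,1)-matrices with exactly k ones in each row and column. -/
def Aclass (n k : ℕ) : Set (Matrix (Fin n) (Fin n) ℕ) :=
  {M | IsZeroOne M ∧ (∀ i, ∑ j, M i j = k) ∧ (∀ j, ∑ i, M i j = k)}

/-- `P` is a permutation matrix. -/
def IsPermMatrix {n : ℕ} (P : Matrix (Fin n) (Fin n) ℕ) : Prop :=
  ∃ e : Equiv.Perm (Fin n), ∀ i j, P i j = if j = e i then 1 else 0

/-- `A` and `B` are combinatorially equivalent: `B = PAQ` or `B = PAᵀQ` for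
permutation matrices `P`, `Q`. -/
def CombEquiv {n : ℕ} (A B : Matrix (Fin n) (Fin n) ℕ) : Prop :=
  ∃ P Q, IsPermMatrix P ∧ IsPermMatrix Q ∧ (B = P * A * Q ∨ B = P * A.transpose * Q)

/-- Index of the block (of consecutive sizes `L`) containing position `i`. -/
def blockIdx : List ℕ → ℕ → ℕ
  | [], _ => 0
  | s :: L, i => if i < s then 0 else blockIdx L (i - s) + 1

/-- The n×n block-diagonal direct sum of all-ones blocks of sizes `L`
(with `L.sum = n`). -/
def listBlocks (n : ℕ) (L : List ℕ) : Matrix (Fin n) (Fin n) ℕ :=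
  Matrix.of fun i j => if blockIdx L (i : ℕ) = blockIdx L (j : ℕ) then 1 else 0

/-- The n×n block-diagonal matrix with a head block `B` (of size `m`) followed by
all-ones blocks of sizes `L` (with `m + L.sum = n`). -/
def headBlocks (n : ℕ) {m : ℕ} (B : Matrix (Fin m) (Fin m) ℕ) (L : List ℕ) :
    Matrix (Fin n) (Fin n) ℕ :=
  Matrix.of fun i j =>
    if h : (i : ℕ) < m ∧ (j : ℕ) < m then B ⟨(i : ℕ), h.1⟩ ⟨(j : ℕ), h.2⟩
    else if m ≤ (i : ℕ) ∧ m ≤ (j : ℕ) ∧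
        blockIdx L ((i : ℕ) - m) = blockIdx L ((j : ℕ) - m) then 1 else 0

/-- `M` with the `(i0, j0)` entry changed to `1`. -/
def setOne {n : ℕ} (M : Matrix (Fin n) (Fin n) ℕ) (i0 j0 : Fin n) :
    Matrix (Fin n) (Fin n) ℕ :=
  Matrix.of fun i j => if i = i0 ∧ j = j0 then 1 else M i j

/-- `J₃ - I₃`. -/
def J3mI3 : Matrix (Fin 3) (Fin 3) ℕ := Matrix.of fun i j => if i = j then 0 else 1

/-- `J₄ - I₄`. -/
def J4mI4 : Matrix (Fin 4) (Fin 4) ℕ := Matrix.of fun i j => if i = j then 0 else 1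

/-- `A₃`: the 3×3 all-ones matrix except the (1,1) entry is 0. -/
def A3 : Matrix (Fin 3) (Fin 3) ℕ := Matrix.of fun i j => if i = 0 ∧ j = 0 then 0 else 1

/-- `A₃ ⊕ I₂`. -/
def V5 : Matrix (Fin 5) (Fin 5) ℕ :=
  !![0,1,1,0,0; 1,1,1,0,0; 1,1,1,0,0; 0,0,0,1,0; 0,0,0,0,1]

/-- `J₃ ⊕ I₂`. -/
def S5 : Matrix (Fin 5) (Fin 5) ℕ :=
  !![1,1,1,0,0; 1,1,1,0,0; 1,1,1,0,0; 0,0,0,1,0; 0,0,0,0,1]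

/-- The head block of `W`. -/
def BW : Matrix (Fin 4) (Fin 4) ℕ :=
  !![0,0,1,1; 1,1,0,1; 1,1,1,0; 1,1,0,1]

/-- The head block of `X`. -/
def BX : Matrix (Fin 4) (Fin 4) ℕ :=
  !![0,0,1,1; 1,0,1,1; 1,1,0,1; 1,1,1,0]

/-- The head block of `Y`. -/
def BY : Matrix (Fin 4) (Fin 4) ℕ :=
  !![0,0,1,1; 1,0,1,1; 1,1,0,0; 1,1,1,1]

/-- `A₃ ⊕ I₁`. -/
def T4 : Matrix (Fin 4) (Fin 4) ℕ :=
  !![0,1,1,0; 1,1,1,0; 1,1,1,0; 0,0,0,1]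

/-- `A₄ ⊕ J₂`, where `A₄` is `J₄` with the (1,1) entry changed to 0. -/
def Q6 : Matrix (Fin 6) (Fin 6) ℕ :=
  !![0,1,1,1,0,0; 1,1,1,1,0,0; 1,1,1,1,0,0; 1,1,1,1,0,0; 0,0,0,0,1,1; 0,0,0,0,1,1]

/-- `J₃ ⊕ I₁`. -/
def M4 : Matrix (Fin 4) (Fin 4) ℕ :=
  !![1,1,1,0; 1,1,1,0; 1,1,1,0; 0,0,0,1]

open Finset Real

/-! ### Permanent as a count of permutations -/

/-- The set of permutations all of whose entries are 1. -/
def permSet {n : ℕ} (M : Matrix (Fin n) (Fin n) ℕ) : Finset (Equiv.Perm (Fin n)) :=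
  Finset.univ.filter fun σ => ∀ i, M i (σ i) = 1

lemma perm_eq_card {n : ℕ} (M : Matrix (Fin n) (Fin n) ℕ) (h01 : IsZeroOne M) :
    perm M = (permSet M).card := by
  unfold perm permSet
  rw [Finset.card_filter]
  refine Finset.sum_congr rfl fun σ _ => ?_
  by_cases h : ∀ i, M i (σ i) = 1
  · rw [Finset.prod_eq_one fun i _ => h i, if_pos h]
  · push_neg at h
    obtain ⟨i, hi⟩ := h
    have h0 : M i (σ i) = 0 := (h01 i (σ i)).resolve_right hi
    rw [Finset.prod_eq_zero (Finset.mem_univ i) h0, if_neg (by push_neg; exact ⟨i, hi⟩)]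

lemma ones_add_zeroCount {n : ℕ} (M : Matrix (Fin n) (Fin n) ℕ) (h01 : IsZeroOne M) :
    (∑ i, ∑ j, M i j) + zeroCount M = n ^ 2 := by
  unfold zeroCount
  rw [Finset.card_filter]
  have hrw : (∑ i, ∑ j, M i j) = ∑ p : Fin n × Fin n, M p.1 p.2 := by
    rw [Fintype.sum_prod_type]
  have : ∀ p : Fin n × Fin n, p ∈ (Finset.univ : Finset (Fin n × Fin n)) →
      M p.1 p.2 + (if M p.1 p.2 = 0 then 1 else 0) = 1 := by
    intro p _
    rcases h01 p.1 p.2 with h | h <;> simp [h]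
  rw [hrw, ← Finset.sum_add_distrib, Finset.sum_congr rfl this, Finset.sum_const,
    Finset.card_univ]
  simp [sq]

lemma perm_eq_zero_of_zero_row {n : ℕ} (M : Matrix (Fin n) (Fin n) ℕ) (i : Fin n)
    (h : ∀ j, M i j = 0) : perm M = 0 := by
  unfold perm
  refine Finset.sum_eq_zero fun σ _ => Finset.prod_eq_zero (Finset.mem_univ i) (h (σ i))

/-! ### The convexity lemma : (∑ t)^(∑ t) ≤ m^(∑ t) * ∏ t_j^(t_j)  (rpow) -/

lemma convex_key {ι : Type*} (s : Finset ι) (t : ι → ℕ) :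
    ((∑ j ∈ s, t j : ℕ) : ℝ) ^ ((∑ j ∈ s, t j : ℕ) : ℝ) ≤
      (s.card : ℝ) ^ ((∑ j ∈ s, t j : ℕ) : ℝ) * ∏ j ∈ s, (t j : ℝ) ^ (t j : ℝ) := by
  set T : ℕ := ∑ j ∈ s, t j with hT
  rcases Nat.eq_zero_or_pos T with h0 | hTpos
  · have : ∀ j ∈ s, t j = 0 := Finset.sum_eq_zero_iff.mp (hT ▸ h0)
    rw [h0]
    simp only [Nat.cast_zero, Real.rpow_zero, one_mul]
    rw [Finset.prod_congr rfl (fun j hj => by rw [this j hj])]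
    simp
  · have hs : s.Nonempty := by
      rcases s.eq_empty_or_nonempty with rfl | h
      · simp at hT; omega
      · exact h
    have hm : (0:ℝ) < s.card := by exact_mod_cast Finset.card_pos.mpr hs
    -- Jensen for x ↦ x log x with equal weights
    have jensen := Real.convexOn_mul_log.map_sum_le (t := s) (w := fun _ => (s.card : ℝ)⁻¹)
      (p := fun j => (t j : ℝ)) (fun i _ => by positivity)
      (by rw [Finset.sum_const, nsmul_eq_mul]; field_simp)
      (fun i _ => Set.mem_Ici.mpr (by positivity))
    simp only [smul_eq_mul] at jensen
    have hsum : ∑ i ∈ s, (s.card : ℝ)⁻¹ * (t i : ℝ) = (T : ℝ) / s.card := by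
      rw [← Finset.mul_sum]; rw [hT]; push_cast; ring
    rw [hsum] at jensen
    -- jensen : (T/m) * log (T/m) ≤ ∑ (1/m) * (t i * log t i)
    have hTpos' : (0:ℝ) < T := by exact_mod_cast hTpos
    have key : (T:ℝ) * Real.log T - (T:ℝ) * Real.log s.card ≤
        ∑ i ∈ s, (t i : ℝ) * Real.log (t i) := by
      have hlog : Real.log ((T:ℝ) / s.card) = Real.log T - Real.log s.card :=
        Real.log_div (ne_of_gt hTpos') (ne_of_gt hm)
      rw [hlog] at jensen
      have := mul_le_mul_of_nonneg_left jensen (le_of_lt hm)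
      rw [Finset.mul_sum] at this
      calc (T:ℝ) * Real.log T - (T:ℝ) * Real.log s.card
          = (s.card : ℝ) * ((T:ℝ) / s.card * (Real.log T - Real.log s.card)) := by
            field_simp
        _ ≤ ∑ i ∈ s, (s.card:ℝ) * ((s.card : ℝ)⁻¹ * ((t i : ℝ) * Real.log (t i))) := this
        _ = ∑ i ∈ s, (t i : ℝ) * Real.log (t i) := by
            refine Finset.sum_congr rfl fun i _ => ?_
            field_simp
    -- exponentiate
    have hxx : ∀ m : ℕ, (m : ℝ) ^ (m : ℝ) = Real.exp ((m:ℝ) * Real.log m) := by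
      intro m
      rcases Nat.eq_zero_or_pos m with rfl | hm'
      · simp
      · rw [Real.rpow_def_of_pos (by exact_mod_cast hm'), mul_comm]
    rw [hxx T]
    have h1 : (s.card : ℝ) ^ ((T:ℕ) : ℝ) = Real.exp ((T:ℝ) * Real.log s.card) := by
      rw [Real.rpow_def_of_pos hm, mul_comm]
    have h2 : ∏ j ∈ s, (t j : ℝ) ^ (t j : ℝ) = Real.exp (∑ j ∈ s, (t j:ℝ) * Real.log (t j)) := by
      rw [Real.exp_sum]
      exact Finset.prod_congr rfl fun j _ => hxx (t j)
    rw [h1, h2, ← Real.exp_add, Real.exp_le_exp]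
    linarith [key]

/-! ### Concavity of `f r = log r! / r` -/

/-- `g r = (r!)^(1/r)`, the Bregman row factor. -/
noncomputable def gfac (r : ℕ) : ℝ := (r.factorial : ℝ) ^ ((r : ℝ)⁻¹)

/-- `flog r = log (r!) / r`. -/
noncomputable def flog (r : ℕ) : ℝ := Real.log (r.factorial) / r

lemma gfac_pos (r : ℕ) : 0 < gfac r := by
  unfold gfac
  exact Real.rpow_pos_of_pos (by exact_mod_cast r.factorial_pos) _

lemma gfac_eq_exp {r : ℕ} (hr : 1 ≤ r) : gfac r = Real.exp (flog r) := by
  unfold gfac flog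
  rw [Real.rpow_def_of_pos (by exact_mod_cast r.factorial_pos)]
  rw [div_eq_mul_inv]

lemma factorial_exp_bound (r : ℕ) :
    (r.factorial : ℝ) * Real.exp (r / 2) ≤ ((r : ℝ) + 1) ^ r := by
  induction r with
  | zero => simp
  | succ r ih =>
    have hexp : Real.exp (1/2) ≤ 2 := by
      have h2 : (1:ℝ)/2 ≤ Real.log 2 := by
        have := Real.log_two_gt_d9; linarith
      calc Real.exp (1/2) ≤ Real.exp (Real.log 2) := Real.exp_le_exp.mpr h2
        _ = 2 := Real.exp_log (by norm_num)
    have hbin : (2:ℝ) * ((r:ℝ) + 1) ^ (r+1) ≤ ((r:ℝ) + 2) ^ (r+1) := by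
      have h1 : (1:ℝ) + (r+1) * (1/((r:ℝ)+1)) ≤ (1 + 1/((r:ℝ)+1)) ^ (r+1) := by
        have := one_add_mul_le_pow (a := 1/((r:ℝ)+1)) (le_trans (by norm_num) (by positivity : (0:ℝ) ≤ 1/((r:ℝ)+1))) (r+1)
        exact_mod_cast this
      have h2 : (1:ℝ) + (r+1) * (1/((r:ℝ)+1)) = 2 := by
        field_simp
        norm_num
      have h3 : ((1:ℝ) + 1/((r:ℝ)+1)) ^ (r+1) * ((r:ℝ)+1)^(r+1) = ((r:ℝ)+2)^(r+1) := by
        rw [← mul_pow]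
        congr 1
        field_simp
        ring
      calc (2:ℝ) * ((r:ℝ)+1)^(r+1) ≤ ((1:ℝ) + 1/((r:ℝ)+1)) ^ (r+1) * ((r:ℝ)+1)^(r+1) := by
            rw [h2] at h1
            exact mul_le_mul_of_nonneg_right h1 (by positivity)
        _ = ((r:ℝ)+2)^(r+1) := h3
    have main : (((r+1).factorial : ℕ) : ℝ) * Real.exp (((r:ℝ)+1) / 2) ≤ ((r:ℝ) + 2) ^ (r+1) := by
      have step : (((r+1).factorial : ℕ) : ℝ) * Real.exp (((r:ℝ)+1) / 2)
          = ((r.factorial : ℝ) * Real.exp ((r:ℝ)/2)) * (((r:ℝ)+1) * Real.exp (1/2)) := by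
        rw [Nat.factorial_succ]
        push_cast
        rw [show ((r:ℝ)+1)/2 = (r:ℝ)/2 + 1/2 by ring, Real.exp_add]
        ring
      rw [step]
      calc ((r.factorial : ℝ) * Real.exp ((r:ℝ)/2)) * (((r:ℝ)+1) * Real.exp (1/2))
          ≤ ((r:ℝ)+1)^r * (((r:ℝ)+1) * 2) := by
            apply mul_le_mul ih
            · exact mul_le_mul_of_nonneg_left hexp (by positivity)
            · positivity
            · positivity
        _ = 2 * ((r:ℝ)+1)^(r+1) := by ring
        _ ≤ ((r:ℝ)+2)^(r+1) := hbin
    push_cast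
    calc (((r+1).factorial : ℕ) : ℝ) * Real.exp (((r:ℝ) + 1) / 2)
        ≤ ((r:ℝ) + 2) ^ (r+1) := main
      _ = ((r:ℝ) + 1 + 1) ^ (r+1) := by ring_nf

lemma flog_concave {r : ℕ} (hr : 1 ≤ r) :
    flog (r + 2) - flog (r + 1) ≤ flog (r + 1) - flog r := by
  have hfacpos : (0:ℝ) < r.factorial := by exact_mod_cast r.factorial_pos
  have hrpos : (0:ℝ) < r := by exact_mod_cast hr
  have hne1 : ((r:ℝ)) ≠ 0 := ne_of_gt hrpos
  have hne2 : ((r:ℝ)+1) ≠ 0 := by positivity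
  have hne3 : ((r:ℝ)+2) ≠ 0 := by positivity
  have hf1 : flog r = Real.log r.factorial / r := rfl
  have hf2 : flog (r+1) = (Real.log r.factorial + Real.log ((r:ℝ)+1)) / ((r:ℝ)+1) := by
    unfold flog
    rw [Nat.factorial_succ]
    push_cast
    rw [Real.log_mul (by positivity) (ne_of_gt hfacpos)]
    ring
  have hf3 : flog (r+2) = (Real.log r.factorial + Real.log ((r:ℝ)+1) + Real.log ((r:ℝ)+2))
      / ((r:ℝ)+2) := by
    unfold flog
    rw [show r + 2 = (r+1) + 1 by ring, Nat.factorial_succ, Nat.factorial_succ]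
    push_cast
    rw [Real.log_mul (by positivity) (by positivity),
        Real.log_mul (by positivity) (ne_of_gt hfacpos)]
    rw [show (r:ℝ)+1+1 = (r:ℝ)+2 by ring]
    ring
  -- key inequality : 2 log r! ≤ r(r+3) log(r+1) - r(r+1) log(r+2)
  have key : 2 * Real.log r.factorial ≤ (r:ℝ) * ((r:ℝ)+3) * Real.log ((r:ℝ)+1)
      - (r:ℝ) * ((r:ℝ)+1) * Real.log ((r:ℝ)+2) := by
    have hi : 2 * Real.log r.factorial ≤ 2 * (r:ℝ) * Real.log ((r:ℝ)+1) - (r:ℝ) := by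
      have hlog := Real.log_le_log (by positivity : (0:ℝ) < (r.factorial : ℝ) * Real.exp (r/2))
        (factorial_exp_bound r)
      rw [Real.log_mul (ne_of_gt hfacpos) (Real.exp_ne_zero _), Real.log_exp,
        Real.log_pow] at hlog
      linarith
    have hii : Real.log ((r:ℝ)+2) - Real.log ((r:ℝ)+1) ≤ 1 / ((r:ℝ)+1) := by
      have hq : Real.log ((r:ℝ)+2) - Real.log ((r:ℝ)+1)
          = Real.log (((r:ℝ)+2) / ((r:ℝ)+1)) := by
        rw [Real.log_div (by positivity) (by positivity)]
      rw [hq]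
      have h5 := Real.log_le_sub_one_of_pos (x := ((r:ℝ)+2)/((r:ℝ)+1)) (by positivity)
      have heq : ((r:ℝ)+2)/((r:ℝ)+1) - 1 = 1/((r:ℝ)+1) := by
        field_simp
        norm_num
      linarith [heq ▸ h5]
    have hiii : (r:ℝ) * ((r:ℝ)+1) * Real.log ((r:ℝ)+2)
        ≤ (r:ℝ) * ((r:ℝ)+1) * Real.log ((r:ℝ)+1) + (r:ℝ) := by
      have h6 := mul_le_mul_of_nonneg_left hii (by positivity : (0:ℝ) ≤ (r:ℝ) * ((r:ℝ)+1))
      have heq : (r:ℝ) * ((r:ℝ)+1) * (1/((r:ℝ)+1)) = (r:ℝ) := by field_simp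
      nlinarith
    nlinarith
  rw [hf1, hf2, hf3, ← sub_nonneg]
  have hid : ((Real.log r.factorial + Real.log ((r:ℝ)+1)) / ((r:ℝ)+1)
        - Real.log r.factorial / r)
      - ((Real.log r.factorial + Real.log ((r:ℝ)+1) + Real.log ((r:ℝ)+2)) / ((r:ℝ)+2)
        - (Real.log r.factorial + Real.log ((r:ℝ)+1)) / ((r:ℝ)+1))
      = (((r:ℝ) * ((r:ℝ)+3) * Real.log ((r:ℝ)+1) - (r:ℝ) * ((r:ℝ)+1) * Real.log ((r:ℝ)+2))
          - 2 * Real.log r.factorial) / ((r:ℝ) * ((r:ℝ)+1) * ((r:ℝ)+2)) := by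
    field_simp
    ring
  rw [hid]
  apply div_nonneg (by linarith) (by positivity)

/-! ### Chord bound from concavity -/

/-- Differences `flog (j+1) - flog j` are monotone decreasing. -/
lemma flog_diff_anti {k j : ℕ} (hk : 1 ≤ k) (hkj : k ≤ j) :
    flog (j + 1) - flog j ≤ flog (k + 1) - flog k := by
  induction j, hkj using Nat.le_induction with
  | base => exact le_refl _
  | succ j hj ih =>
    have h := flog_concave (le_trans hk hj)
    calc flog (j + 1 + 1) - flog (j + 1) ≤ flog (j + 1) - flog j := by
          have := flog_concave (le_trans hk hj)
          convert this using 2 <;> omega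
      _ ≤ flog (k + 1) - flog k := ih

lemma flog_chord_ge {k r : ℕ} (hk : 1 ≤ k) (hkr : k ≤ r) :
    flog r ≤ flog k + ((r : ℝ) - (k : ℝ)) * (flog (k+1) - flog k) := by
  induction r, hkr using Nat.le_induction with
  | base => simp
  | succ r hr ih =>
    have hstep : flog (r + 1) - flog r ≤ flog (k+1) - flog k := flog_diff_anti hk hr
    have : flog (r + 1) ≤ flog k + ((r:ℝ) - k) * (flog (k+1) - flog k)
        + (flog (k+1) - flog k) := by linarith
    calc flog (r+1) ≤ flog k + ((r:ℝ) - k) * (flog (k+1) - flog k)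
          + (flog (k+1) - flog k) := this
      _ = flog k + (((r:ℝ)+1) - k) * (flog (k+1) - flog k) := by ring
      _ = flog k + (((r+1 : ℕ):ℝ) - k) * (flog (k+1) - flog k) := by push_cast; ring

lemma flog_chord_le {k : ℕ} (hk : 1 ≤ k) :
    ∀ d r : ℕ, 1 ≤ r → r + d = k →
      flog r ≤ flog k + ((r : ℝ) - (k : ℝ)) * (flog (k+1) - flog k) := by
  intro d
  induction d with
  | zero =>
    intro r _ hr
    subst hr
    simp
  | succ d ih =>
    intro r hr1 hrd
    have hrk : r + 1 ≤ k := by omega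
    have ih' := ih (r+1) (by omega) (by omega)
    have hstep : flog (k+1) - flog k ≤ flog (r + 1) - flog r :=
      flog_diff_anti hr1 (by omega)
    have : flog r ≤ flog (r+1) - (flog (k+1) - flog k) := by linarith
    calc flog r ≤ flog (r+1) - (flog (k+1) - flog k) := this
      _ ≤ flog k + (((r+1:ℕ):ℝ) - k) * (flog (k+1) - flog k)
            - (flog (k+1) - flog k) := by linarith
      _ = flog k + ((r:ℝ) - k) * (flog (k+1) - flog k) := by push_cast; ring

lemma flog_chord {k r : ℕ} (hk : 1 ≤ k) (hr : 1 ≤ r) :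
    flog r ≤ flog k + ((r : ℝ) - (k : ℝ)) * (flog (k+1) - flog k) := by
  rcases le_total k r with h | h
  · exact flog_chord_ge hk h
  · exact flog_chord_le hk (k - r) r hr (by omega)

/-- Maximization: the sum of `flog (r i)` given `∑ r = k n + p`. -/
lemma sum_flog_le {n k p : ℕ} (hk : 1 ≤ k) (hp : p ≤ n) (r : Fin n → ℕ)
    (h1 : ∀ i, 1 ≤ r i) (hsum : ∑ i, r i = k * n + p) :
    ∑ i, flog (r i) ≤ (p : ℝ) * flog (k+1) + ((n - p : ℕ) : ℝ) * flog k := by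
  have hbound : ∀ i, flog (r i) ≤ flog k + ((r i : ℝ) - k) * (flog (k+1) - flog k) :=
    fun i => flog_chord hk (h1 i)
  calc ∑ i, flog (r i)
      ≤ ∑ i : Fin n, (flog k + ((r i : ℝ) - k) * (flog (k+1) - flog k)) :=
        Finset.sum_le_sum fun i _ => hbound i
    _ = (n : ℝ) * flog k + ((∑ i, (r i : ℝ)) - (k:ℝ) * n) * (flog (k+1) - flog k) := by
        rw [Finset.sum_add_distrib, Finset.sum_const, Finset.card_univ]
        simp only [Fintype.card_fin, nsmul_eq_mul]
        rw [← Finset.sum_mul, Finset.sum_sub_distrib, Finset.sum_const, Finset.card_univ]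
        simp only [Fintype.card_fin, nsmul_eq_mul]
        ring
    _ = (p : ℝ) * flog (k+1) + ((n - p : ℕ) : ℝ) * flog k := by
        have : (∑ i, (r i : ℝ)) = (k:ℝ) * n + p := by
          rw [← Nat.cast_sum]
          rw [hsum]
          push_cast
          ring
        rw [this]
        rw [Nat.cast_sub hp]
        ring

/-! ### Minors -/

/-- The minor of `A` obtained by deleting row `i` and column `j`. -/
def mino {n : ℕ} (A : Matrix (Fin (n+1)) (Fin (n+1)) ℕ) (i j : Fin (n+1)) :
    Matrix (Fin n) (Fin n) ℕ :=
  A.submatrix i.succAbove j.succAbove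

lemma mino_isZeroOne {n : ℕ} (A : Matrix (Fin (n+1)) (Fin (n+1)) ℕ) (h01 : IsZeroOne A)
    (i j : Fin (n+1)) : IsZeroOne (mino A i j) := fun l c => h01 _ _

lemma mino_rowsum {n : ℕ} (A : Matrix (Fin (n+1)) (Fin (n+1)) ℕ) (i j : Fin (n+1)) (l : Fin n) :
    ∑ c, mino A i j l c = (∑ c, A (i.succAbove l) c) - A (i.succAbove l) j := by
  have h := Fin.sum_univ_succAbove (fun c => A (i.succAbove l) c) j
  have : ∑ c, mino A i j l c = ∑ c : Fin n, A (i.succAbove l) (j.succAbove c) := rfl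
  omega

lemma removeNone_spec {n : ℕ} (σ : Equiv.Perm (Fin (n+1))) (i j : Fin (n+1))
    (hσ : σ i = j) (l : Fin n) :
    j.succAbove ((Equiv.removeNone ((finSuccEquiv' i).symm.trans
      (σ.trans (finSuccEquiv' j)))) l) = σ (i.succAbove l) := by
  set e := (finSuccEquiv' i).symm.trans (σ.trans (finSuccEquiv' j)) with he
  have h1 : σ (i.succAbove l) ≠ j := by
    intro h
    exact Fin.succAbove_ne i l (σ.injective (h.trans hσ.symm))
  obtain ⟨c, hc⟩ := Fin.exists_succAbove_eq h1
  have h2 : e (some l) = some c := by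
    show (finSuccEquiv' j) (σ ((finSuccEquiv' i).symm (some l))) = some c
    rw [finSuccEquiv'_symm_some, ← hc, finSuccEquiv'_succAbove]
  have h3 := Equiv.removeNone_some e ⟨c, h2⟩
  rw [h2] at h3
  rw [Option.some_inj.mp h3.symm] at hc
  exact hc

/-- Counting permutations through a fixed `1`-entry as a minor permanent. -/
lemma card_filter_eq_perm_mino {n : ℕ} (A : Matrix (Fin (n+1)) (Fin (n+1)) ℕ)
    (h01 : IsZeroOne A) (i j : Fin (n+1)) (hij : A i j = 1) :
    ((permSet A).filter fun σ => σ i = j).card = perm (mino A i j) := by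
  rw [perm_eq_card _ (mino_isZeroOne A h01 i j)]
  apply Finset.card_bij'
    (i := fun σ _ => Equiv.removeNone ((finSuccEquiv' i).symm.trans (σ.trans (finSuccEquiv' j))))
    (j := fun τ _ => (finSuccEquiv' i).trans ((Equiv.optionCongr τ).trans (finSuccEquiv' j).symm))
  · -- forward map lands in permSet (mino A i j)
    intro σ hσ
    rw [Finset.mem_filter] at hσ
    obtain ⟨hσS, hσi⟩ := hσ
    have hall : ∀ x, A x (σ x) = 1 := by
      simp only [permSet, Finset.mem_filter] at hσS
      exact hσS.2
    simp only [permSet, Finset.mem_filter]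
    refine ⟨Finset.mem_univ _, fun l => ?_⟩
    have hspec := removeNone_spec σ i j hσi l
    show A (i.succAbove l) (j.succAbove _) = 1
    rw [hspec]
    exact hall (i.succAbove l)
  · -- backward map lands in the filter
    intro τ hτ
    simp only [permSet, Finset.mem_filter] at hτ ⊢
    obtain ⟨-, hall⟩ := hτ
    have happ : ∀ l : Fin n,
        ((finSuccEquiv' i).trans ((Equiv.optionCongr τ).trans (finSuccEquiv' j).symm))
          (i.succAbove l) = j.succAbove (τ l) := by
      intro l
      show (finSuccEquiv' j).symm (Equiv.optionCongr τ ((finSuccEquiv' i) (i.succAbove l)))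
        = j.succAbove (τ l)
      rw [finSuccEquiv'_succAbove, Equiv.optionCongr_apply, Option.map_some,
        finSuccEquiv'_symm_some]
    have hati : ((finSuccEquiv' i).trans ((Equiv.optionCongr τ).trans (finSuccEquiv' j).symm))
        i = j := by
      show (finSuccEquiv' j).symm (Equiv.optionCongr τ ((finSuccEquiv' i) i)) = j
      rw [finSuccEquiv'_at, Equiv.optionCongr_apply, Option.map_none, finSuccEquiv'_symm_none]
    refine ⟨⟨Finset.mem_univ _, fun x => ?_⟩, hati⟩
    rcases eq_or_ne x i with h | hx
    · rw [h, hati]; exact hij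
    · obtain ⟨l, hl⟩ := Fin.exists_succAbove_eq hx
      rw [← hl, happ l]
      exact hall l
  · -- left inverse
    intro σ hσ
    rw [Finset.mem_filter] at hσ
    obtain ⟨-, hσi⟩ := hσ
    set F := Equiv.removeNone ((finSuccEquiv' i).symm.trans (σ.trans (finSuccEquiv' j)))
      with hF
    have hGi : ((finSuccEquiv' i).trans ((Equiv.optionCongr F).trans (finSuccEquiv' j).symm)) i
        = j := by
      show (finSuccEquiv' j).symm (Equiv.optionCongr F ((finSuccEquiv' i) i)) = j
      rw [finSuccEquiv'_at, Equiv.optionCongr_apply, Option.map_none, finSuccEquiv'_symm_none]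
    have happ : ∀ l : Fin n,
        ((finSuccEquiv' i).trans ((Equiv.optionCongr F).trans (finSuccEquiv' j).symm))
          (i.succAbove l) = j.succAbove (F l) := by
      intro l
      show (finSuccEquiv' j).symm (Equiv.optionCongr F ((finSuccEquiv' i) (i.succAbove l))) = _
      rw [finSuccEquiv'_succAbove, Equiv.optionCongr_apply, Option.map_some,
        finSuccEquiv'_symm_some]
    ext x
    rcases eq_or_ne x i with h | hx
    · rw [h, hGi, hσi]
    · obtain ⟨l, hl⟩ := Fin.exists_succAbove_eq hx
      rw [← hl, happ l, hF, removeNone_spec σ i j hσi l]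
  · -- right inverse
    intro τ hτ
    set G := (finSuccEquiv' i).trans ((Equiv.optionCongr τ).trans (finSuccEquiv' j).symm) with hG
    have hGi : G i = j := by
      show (finSuccEquiv' j).symm (Equiv.optionCongr τ ((finSuccEquiv' i) i)) = j
      rw [finSuccEquiv'_at, Equiv.optionCongr_apply, Option.map_none, finSuccEquiv'_symm_none]
    ext l
    have h1 := removeNone_spec G i j hGi l
    have h2 : G (i.succAbove l) = j.succAbove (τ l) := by
      show (finSuccEquiv' j).symm (Equiv.optionCongr τ ((finSuccEquiv' i) (i.succAbove l)))
        = j.succAbove (τ l)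
      rw [finSuccEquiv'_succAbove, Equiv.optionCongr_apply, Option.map_some,
        finSuccEquiv'_symm_some]
    rw [h2] at h1
    exact congrArg Fin.val (Fin.succAbove_right_injective h1)

/-! ### The Bregman–Minc inequality -/

lemma gfac_pow_self (t : ℕ) : gfac t ^ t = (t.factorial : ℝ) := by
  rcases Nat.eq_zero_or_pos t with rfl | ht
  · simp [gfac]
  · unfold gfac
    rw [← Real.rpow_natCast ((t.factorial : ℝ) ^ ((t:ℝ)⁻¹)) t, ← Real.rpow_mul (by positivity),
      inv_mul_cancel₀ (Nat.cast_ne_zero.mpr ht.ne' : (t:ℝ) ≠ 0), Real.rpow_one]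

lemma convex_key' {ι : Type*} (s : Finset ι) (t : ι → ℕ) :
    ((∑ j ∈ s, t j : ℕ) : ℝ) ^ (∑ j ∈ s, t j) ≤
      (s.card : ℝ) ^ (∑ j ∈ s, t j) * ∏ j ∈ s, (t j : ℝ) ^ (t j) := by
  have h := convex_key s t
  simp only [Real.rpow_natCast] at h
  exact h

lemma prod_succAbove {n : ℕ} (f : Fin (n+1) → ℝ) (x : Fin (n+1)) (hf : f x ≠ 0) :
    ∏ l : Fin n, f (x.succAbove l) = ∏ y ∈ Finset.univ.erase x, f y := by
  have h1 := Fin.prod_univ_succAbove f x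
  have h2 := Finset.mul_prod_erase Finset.univ f (Finset.mem_univ x)
  rw [← h2] at h1
  exact (mul_left_cancel₀ hf h1).symm

theorem bregman : ∀ {n : ℕ} (A : Matrix (Fin n) (Fin n) ℕ), IsZeroOne A →
    (perm A : ℝ) ≤ ∏ x, gfac (∑ j, A x j) := by
  intro n
  induction n with
  | zero =>
    intro A _
    have h1 : perm A = ∑ _φ : Equiv.Perm (Fin 0), 1 :=
      Finset.sum_congr rfl (fun σ _ => by simp)
    rw [h1]
    simp
  | succ n IH =>
    intro A h01
    set r : Fin (n+1) → ℕ := fun x => ∑ j, A x j with hrdef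
    have hRHSpos : (0:ℝ) < ∏ x, gfac (r x) := Finset.prod_pos fun x _ => gfac_pos _
    rw [perm_eq_card A h01]
    rcases Nat.eq_zero_or_pos (permSet A).card with hP0 | hPpos
    · rw [hP0]
      simpa using le_of_lt hRHSpos
    obtain ⟨σ₀, hσ₀⟩ := Finset.card_pos.mp hPpos
    have hallS : ∀ σ ∈ permSet A, ∀ x, A x (σ x) = 1 := by
      intro σ hσ
      simp only [permSet, Finset.mem_filter] at hσ
      exact hσ.2
    have hσ₀' : ∀ x, A x (σ₀ x) = 1 := hallS σ₀ hσ₀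
    have hrow1 : ∀ x, 1 ≤ r x := by
      intro x
      have h : A x (σ₀ x) ≤ r x := by
        simpa using Finset.single_le_sum (f := fun j => A x j)
          (fun _ _ => Nat.zero_le _) (Finset.mem_univ (σ₀ x))
      rw [hσ₀' x] at h
      exact h
    have hrown : ∀ x, r x ≤ n + 1 := by
      intro x
      calc r x ≤ ∑ _j : Fin (n+1), 1 :=
            Finset.sum_le_sum (fun j _ => by rcases h01 x j with h|h <;> omega)
        _ = n + 1 := by simp
    set P := (permSet A).card with hPdef
    set m : Fin (n+1) → Fin (n+1) → ℕ :=
      fun x j => ((permSet A).filter fun σ => σ x = j).card with hmdef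
    have hmsum : ∀ x, ∑ j, m x j = P := by
      intro x
      simp only [hmdef, hPdef]
      exact (Finset.card_eq_sum_card_fiberwise (fun σ _ => Finset.mem_univ (σ x))).symm
    have hmzero : ∀ x j, A x j ≠ 1 → m x j = 0 := by
      intro x j hA
      simp only [hmdef]
      rw [Finset.card_eq_zero, Finset.filter_eq_empty_iff]
      intro σ hσ hc
      exact hA (hc ▸ hallS σ hσ x)
    have hNcard : ∀ x, (Finset.univ.filter fun j => A x j = 1).card = r x := by
      intro x
      rw [Finset.card_filter]
      simp only [hrdef]
      exact (Finset.sum_congr rfl (fun j _ => by rcases h01 x j with h|h <;> simp [h])).symm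
    -- Step 1+2 : per-row convexity and regrouping
    have step12 : ∀ x : Fin (n+1),
        (P:ℝ) ^ P ≤ (r x : ℝ) ^ P * ∏ σ ∈ permSet A, (m x (σ x) : ℝ) := by
      intro x
      have hT : ∑ j ∈ Finset.univ.filter (fun j => A x j = 1), m x j = P := by
        rw [← hmsum x]
        apply Finset.sum_subset (Finset.filter_subset _ _)
        intro j _ hj
        exact hmzero x j (by simpa using hj)
      have hck := convex_key' (Finset.univ.filter fun j => A x j = 1) (m x)
      rw [hT, hNcard x] at hck
      refine le_trans hck (mul_le_mul_of_nonneg_left ?_ (by positivity))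
      have hfib : ∏ σ ∈ permSet A, (m x (σ x) : ℝ)
          = ∏ j : Fin (n+1), ∏ σ ∈ (permSet A).filter (fun σ => σ x = j), (m x (σ x) : ℝ) :=
        (Finset.prod_fiberwise_of_maps_to (fun σ _ => Finset.mem_univ (σ x)) _).symm
      have hinner : ∀ j : Fin (n+1),
          ∏ σ ∈ (permSet A).filter (fun σ => σ x = j), (m x (σ x) : ℝ)
            = (m x j : ℝ) ^ (m x j) := by
        intro j
        rw [Finset.prod_congr rfl (fun σ hσ => by rw [(Finset.mem_filter.mp hσ).2]),
          Finset.prod_const]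
      rw [hfib, Finset.prod_congr rfl (fun j _ => hinner j)]
      apply le_of_eq
      apply Finset.prod_subset (Finset.filter_subset _ _)
      intro j _ hj
      rw [hmzero x j (by simpa using hj)]
      norm_num
    -- Step 3 : product over rows
    have step3 : ((P:ℝ) ^ P) ^ (n+1)
        ≤ (∏ x, (r x : ℝ)) ^ P * ∏ σ ∈ permSet A, ∏ x, (m x (σ x) : ℝ) := by
      calc ((P:ℝ)^P)^(n+1) = ∏ _x : Fin (n+1), (P:ℝ)^P := by
            rw [Finset.prod_const, Finset.card_univ, Fintype.card_fin]
        _ ≤ ∏ x : Fin (n+1), ((r x:ℝ)^P * ∏ σ ∈ permSet A, (m x (σ x):ℝ)) :=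
            Finset.prod_le_prod (fun x _ => by positivity) (fun x _ => step12 x)
        _ = (∏ x, (r x:ℝ))^P * ∏ x, ∏ σ ∈ permSet A, (m x (σ x):ℝ) := by
            rw [Finset.prod_mul_distrib, Finset.prod_pow]
        _ = (∏ x, (r x:ℝ))^P * ∏ σ ∈ permSet A, ∏ x, (m x (σ x):ℝ) := by
            rw [Finset.prod_comm]
    -- Step 4 : per-permutation bound via minors and the inductive hypothesis
    have step4 : ∀ σ ∈ permSet A, ∏ x, (m x (σ x) : ℝ)
        ≤ ∏ y, (((r y - 1).factorial : ℝ) * gfac (r y) ^ (n + 1 - r y)) := by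
      intro σ hσ
      have hAσ : ∀ x, A x (σ x) = 1 := hallS σ hσ
      have hfac : ∀ x, (m x (σ x) : ℝ)
          ≤ ∏ l : Fin n, gfac (r (x.succAbove l) - A (x.succAbove l) (σ x)) := by
        intro x
        have hminor := card_filter_eq_perm_mino A h01 x (σ x) (hAσ x)
        have hIH := IH (mino A x (σ x)) (mino_isZeroOne A h01 x (σ x))
        rw [← hminor] at hIH
        have hmx : (m x (σ x) : ℝ)
            = (((permSet A).filter fun τ => τ x = σ x).card : ℝ) := by
          simp only [hmdef]
        rw [hmx]
        refine le_trans hIH (le_of_eq (Finset.prod_congr rfl fun l _ => ?_))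
        rw [mino_rowsum]
      calc ∏ x, (m x (σ x):ℝ)
          ≤ ∏ x, ∏ l : Fin n, gfac (r (x.succAbove l) - A (x.succAbove l) (σ x)) :=
            Finset.prod_le_prod (fun x _ => by positivity) (fun x _ => hfac x)
        _ = ∏ x, ∏ y ∈ Finset.univ.erase x, gfac (r y - A y (σ x)) := by
            refine Finset.prod_congr rfl fun x _ => ?_
            exact prod_succAbove (fun y => gfac (r y - A y (σ x))) x (ne_of_gt (gfac_pos _))
        _ = ∏ y, ∏ x ∈ Finset.univ.erase y, gfac (r y - A y (σ x)) := by
            apply Finset.prod_comm'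
            intro x y
            simp only [Finset.mem_univ, Finset.mem_erase, true_and, and_true]
            exact ⟨fun h => h.symm, fun h => h.symm⟩
        _ = ∏ y, (((r y - 1).factorial : ℝ) * gfac (r y) ^ (n + 1 - r y)) := by
            refine Finset.prod_congr rfl fun y _ => ?_
            have hre : ∏ x ∈ Finset.univ.erase y, gfac (r y - A y (σ x))
                = ∏ j ∈ Finset.univ.erase (σ y), gfac (r y - A y j) := by
              refine Finset.prod_nbij' (fun x => σ x) (fun j => σ.symm j) ?_ ?_ ?_ ?_ ?_
              · intro a ha
                simp only [Finset.mem_erase, Finset.mem_univ, and_true] at ha ⊢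
                exact fun h => ha (σ.injective h)
              · intro a ha
                simp only [Finset.mem_erase, Finset.mem_univ, and_true] at ha ⊢
                intro h
                apply ha
                rw [← h, Equiv.apply_symm_apply]
              · intro a _
                exact σ.symm_apply_apply a
              · intro a _
                exact σ.apply_symm_apply a
              · intro a _
                rfl
            rw [hre, ← Finset.prod_filter_mul_prod_filter_not (Finset.univ.erase (σ y))
              (fun j => A y j = 1)]
            have hc1 : ((Finset.univ.erase (σ y)).filter fun j => A y j = 1).card = r y - 1 := by
              have hmem : σ y ∈ Finset.univ.filter (fun j => A y j = 1) :=
                Finset.mem_filter.mpr ⟨Finset.mem_univ (σ y), hAσ y⟩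
              rw [Finset.filter_erase, Finset.card_erase_of_mem hmem, hNcard y]
            have hc0 : ((Finset.univ.erase (σ y)).filter fun j => ¬ A y j = 1).card
                = n + 1 - r y := by
              have htot := Finset.card_filter_add_card_filter_not
                (s := Finset.univ.erase (σ y)) (fun j => A y j = 1)
              rw [Finset.card_erase_of_mem (Finset.mem_univ _), Finset.card_univ,
                Fintype.card_fin] at htot
              have h1 := hrow1 y
              have h2 := hrown y
              omega
            have hp1 : ∏ j ∈ (Finset.univ.erase (σ y)).filter (fun j => A y j = 1),
                gfac (r y - A y j) = gfac (r y - 1) ^ (r y - 1) := by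
              rw [Finset.prod_congr rfl (fun j hj => by
                rw [(Finset.mem_filter.mp hj).2]), Finset.prod_const, hc1]
            have hp0 : ∏ j ∈ (Finset.univ.erase (σ y)).filter (fun j => ¬ A y j = 1),
                gfac (r y - A y j) = gfac (r y) ^ (n + 1 - r y) := by
              rw [Finset.prod_congr rfl (fun j hj => by
                have h := (Finset.mem_filter.mp hj).2
                have h0' : A y j = 0 := (h01 y j).resolve_right h
                rw [h0', Nat.sub_zero]), Finset.prod_const, hc0]
            rw [hp1, hp0, gfac_pow_self]
    -- Step 5 : assemble
    set C : ℝ := ∏ y, (((r y - 1).factorial : ℝ) * gfac (r y) ^ (n + 1 - r y)) with hC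
    have hCnn : 0 ≤ C := by
      rw [hC]
      apply Finset.prod_nonneg
      intro y _
      exact mul_nonneg (Nat.cast_nonneg _) (pow_nonneg (le_of_lt (gfac_pos _)) _)
    have step5 : ∏ σ ∈ permSet A, ∏ x, (m x (σ x) : ℝ) ≤ C ^ P := by
      calc ∏ σ ∈ permSet A, ∏ x, (m x (σ x):ℝ)
          ≤ ∏ _σ ∈ permSet A, C := Finset.prod_le_prod
            (fun σ _ => Finset.prod_nonneg fun x _ => Nat.cast_nonneg _)
            (fun σ hσ => step4 σ hσ)
        _ = C ^ P := by rw [Finset.prod_const, hPdef]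
    have hD : (∏ x, (r x:ℝ)) * C = (∏ x, gfac (r x)) ^ (n+1) := by
      rw [hC, ← Finset.prod_mul_distrib, ← Finset.prod_pow]
      refine Finset.prod_congr rfl fun x _ => ?_
      have h1 : (r x : ℝ) * (((r x - 1).factorial : ℝ) * gfac (r x) ^ (n + 1 - r x))
          = ((r x).factorial : ℝ) * gfac (r x) ^ (n + 1 - r x) := by
        rw [← mul_assoc]
        congr 1
        rw [← Nat.cast_mul, Nat.mul_factorial_pred (Nat.one_le_iff_ne_zero.mp (hrow1 x))]
      rw [h1, ← gfac_pow_self (r x), ← pow_add]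
      congr 1
      have := hrown x
      have := hrow1 x
      omega
    have final : ((P:ℝ)) ^ ((n+1) * P) ≤ (∏ x, gfac (r x)) ^ ((n+1) * P) := by
      calc (P:ℝ) ^ ((n+1) * P) = ((P:ℝ)^P)^(n+1) := by rw [← pow_mul, Nat.mul_comm]
        _ ≤ (∏ x, (r x : ℝ)) ^ P * ∏ σ ∈ permSet A, ∏ x, (m x (σ x) : ℝ) := step3
        _ ≤ (∏ x, (r x : ℝ)) ^ P * C ^ P := by
            apply mul_le_mul_of_nonneg_left step5 (by positivity)
        _ = ((∏ x, (r x : ℝ)) * C) ^ P := by rw [mul_pow]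
        _ = ((∏ x, gfac (r x)) ^ (n+1)) ^ P := by rw [hD]
        _ = (∏ x, gfac (r x)) ^ ((n+1) * P) := by rw [← pow_mul]
    have hexp : (n+1) * P ≠ 0 := by positivity
    exact (pow_le_pow_iff_left₀ (by positivity) (le_of_lt hRHSpos) hexp).mp final

/-! ### The upper bound -/

lemma perm_le_bound {n k p : ℕ} (hk : 1 ≤ k) (hp : p ≤ n) (M : Matrix (Fin n) (Fin n) ℕ)
    (h01 : IsZeroOne M) (hones : ∑ x, ∑ j, M x j = k * n + p)
    {a b : ℕ} (ha : p = (k+1) * a) (hb : n - p = k * b) :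
    perm M ≤ (k+1).factorial ^ a * k.factorial ^ b := by
  by_cases hz : ∃ x, ∑ j, M x j = 0
  · obtain ⟨x, hx⟩ := hz
    have hrow : ∀ j, M x j = 0 := by
      intro j
      have h2 : M x j ≤ ∑ j', M x j' := by
        simpa using Finset.single_le_sum (f := fun j => M x j)
          (fun _ _ => Nat.zero_le _) (Finset.mem_univ j)
      omega
    rw [perm_eq_zero_of_zero_row M x hrow]
    exact Nat.zero_le _
  · push_neg at hz
    have h1 : ∀ x, 1 ≤ ∑ j, M x j := fun x => Nat.one_le_iff_ne_zero.mpr (hz x)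
    have hbreg := bregman M h01
    have hsum := sum_flog_le hk hp (fun x => ∑ j, M x j) h1 hones
    have hprod : ∏ x, gfac (∑ j, M x j) = Real.exp (∑ x, flog (∑ j, M x j)) := by
      rw [Real.exp_sum]
      exact Finset.prod_congr rfl fun x _ => gfac_eq_exp (h1 x)
    have hrhs : Real.exp ((p:ℝ) * flog (k+1) + ((n-p:ℕ):ℝ) * flog k)
        = (((k+1).factorial : ℝ)) ^ a * ((k.factorial : ℝ)) ^ b := by
      rw [Real.exp_add]
      congr 1
      · have hcoef : (p:ℝ) * flog (k+1) = (a:ℕ) * Real.log ((k+1).factorial) := by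
          unfold flog
          rw [ha]
          push_cast
          have hne : ((k:ℝ)+1) ≠ 0 := by positivity
          field_simp
        rw [hcoef, Real.exp_nat_mul, Real.exp_log (by exact_mod_cast (k+1).factorial_pos)]
      · have hcoef : ((n-p:ℕ):ℝ) * flog k = (b:ℕ) * Real.log (k.factorial) := by
          unfold flog
          rw [hb]
          push_cast
          have hne : (k:ℝ) ≠ 0 := by
            have : (0:ℝ) < k := by exact_mod_cast hk
            exact ne_of_gt this
          field_simp
        rw [hcoef, Real.exp_nat_mul, Real.exp_log (by exact_mod_cast k.factorial_pos)]
    have hfinal : (perm M : ℝ) ≤ (((k+1).factorial : ℝ)) ^ a * ((k.factorial : ℝ)) ^ b := by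
      calc (perm M : ℝ) ≤ ∏ x, gfac (∑ j, M x j) := hbreg
        _ = Real.exp (∑ x, flog (∑ j, M x j)) := hprod
        _ ≤ Real.exp ((p:ℝ) * flog (k+1) + ((n-p:ℕ):ℝ) * flog k) := Real.exp_le_exp.mpr hsum
        _ = _ := hrhs
    exact_mod_cast hfinal

/-! ### Permanent of a block-diagonal all-ones matrix -/

section Fiber

variable {n N : ℕ} (blk : Fin n → Fin N)

/-- Transport along an equality of block indices. -/
lemma fiber_transport (F : (c : Fin N) → Equiv.Perm {i // blk i = c}) (x : Fin n) (c : Fin N)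
    (h : blk x = c) : ((F (blk x)) ⟨x, rfl⟩).1 = ((F c) ⟨x, h⟩).1 := by
  subst h
  rfl

/-- The map from block-preserving permutations to tuples of fiber permutations. -/
def fiberMap (σ : {σ : Equiv.Perm (Fin n) // ∀ i, blk (σ i) = blk i}) :
    (c : Fin N) → Equiv.Perm {i // blk i = c} := fun c =>
  Equiv.Perm.subtypePerm σ.1 (fun x => by
    constructor
    · intro h; rw [← σ.2 x]; exact h
    · intro h; rw [σ.2 x]; exact h)

lemma fiberMap_bijective : Function.Bijective (fiberMap blk) := by
  constructor
  · intro σ σ' h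
    ext x
    have h1 := congrFun h (blk x)
    have h2 := congrArg (fun e => (e ⟨x, rfl⟩ : {i // blk i = blk x}).1) h1
    have h3 : (σ.1 x) = (σ'.1 x) := h2
    exact congrArg Fin.val h3
  · intro F
    -- build the permutation
    have hblk : ∀ x : Fin n, blk (((F (blk x)) ⟨x, rfl⟩).1) = blk x :=
      fun x => ((F (blk x)) ⟨x, rfl⟩).2
    have hinj : Function.Injective (fun x : Fin n => ((F (blk x)) ⟨x, rfl⟩).1) := by
      intro x y hxy
      simp only at hxy
      have hbxy : blk x = blk y := by
        rw [← hblk x, ← hblk y, hxy]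
      have h1 : ((F (blk y)) ⟨x, hbxy⟩).1 = ((F (blk y)) ⟨y, rfl⟩).1 := by
        rw [← fiber_transport blk F x (blk y) hbxy]
        exact hxy
      have h2 : ((F (blk y)) ⟨x, hbxy⟩) = ((F (blk y)) ⟨y, rfl⟩) := Subtype.ext h1
      have h3 := (F (blk y)).injective h2
      exact congrArg Subtype.val h3
    have hsurj : Function.Surjective (fun x : Fin n => ((F (blk x)) ⟨x, rfl⟩).1) := by
      intro z
      set w := (F (blk z)).symm ⟨z, rfl⟩ with hw
      refine ⟨w.1, ?_⟩
      have h1 : ((F (blk w.1)) ⟨w.1, rfl⟩).1 = ((F (blk z)) ⟨w.1, w.2⟩).1 :=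
        fiber_transport blk F w.1 (blk z) w.2
      have h2 : (⟨w.1, w.2⟩ : {i // blk i = blk z}) = w := rfl
      show ((F (blk w.1)) ⟨w.1, rfl⟩).1 = z
      rw [h1, h2, hw, Equiv.apply_symm_apply]
    set e := Equiv.ofBijective _ ⟨hinj, hsurj⟩ with he
    have hepres : ∀ x, blk (e x) = blk x := fun x => hblk x
    refine ⟨⟨e, hepres⟩, ?_⟩
    funext c
    ext ⟨x, hx⟩
    have hfinal : ((fiberMap blk ⟨e, hepres⟩ c) ⟨x, hx⟩).1 = ((F c) ⟨x, hx⟩).1 := by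
      show e x = ((F c) ⟨x, hx⟩).1
      show ((F (blk x)) ⟨x, rfl⟩).1 = ((F c) ⟨x, hx⟩).1
      exact fiber_transport blk F x c hx
    exact congrArg Fin.val hfinal

/-- The permanent of the block-diagonal all-ones matrix determined by `blk`. -/
lemma perm_blockMatrix :
    perm (Matrix.of fun i j : Fin n => if blk i = blk j then 1 else 0)
      = ∏ c : Fin N, (Finset.univ.filter fun i => blk i = c).card.factorial := by
  set M : Matrix (Fin n) (Fin n) ℕ :=
    Matrix.of fun i j : Fin n => if blk i = blk j then 1 else 0 with hM
  have h01 : IsZeroOne M := by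
    intro i j
    simp only [hM, Matrix.of_apply]
    split <;> simp
  rw [perm_eq_card M h01]
  have hiff : ∀ σ : Equiv.Perm (Fin n), (∀ i, M i (σ i) = 1) ↔ (∀ i, blk (σ i) = blk i) := by
    intro σ
    constructor
    · intro h i
      have := h i
      simp only [hM, Matrix.of_apply] at this
      by_contra hc
      rw [if_neg (fun hh => hc hh.symm)] at this
      omega
    · intro h i
      simp only [hM, Matrix.of_apply, if_pos (h i).symm]
  have hcard1 : (permSet M).card = Fintype.card {σ : Equiv.Perm (Fin n) // ∀ i, blk (σ i) = blk i} := by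
    rw [Fintype.card_subtype]
    unfold permSet
    congr 1
    exact Finset.filter_congr (fun σ _ => hiff σ)
  rw [hcard1, Fintype.card_of_bijective (fiberMap_bijective blk)]
  rw [Fintype.card_pi]
  refine Finset.prod_congr rfl fun c _ => ?_
  rw [Fintype.card_perm, Fintype.card_subtype]

end Fiber

/-! ### Counting for the construction -/

lemma ones_blockMatrix {n N : ℕ} (blk : Fin n → Fin N) :
    (∑ i, ∑ j, (Matrix.of fun i j : Fin n => if blk i = blk j then 1 else 0) i j)
      = ∑ c : Fin N, ((Finset.univ.filter fun i => blk i = c).card)^2 := by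
  have hinner : ∀ i : Fin n, (∑ j, (Matrix.of fun i j : Fin n =>
      if blk i = blk j then 1 else 0) i j)
      = (Finset.univ.filter fun j => blk j = blk i).card := by
    intro i
    rw [Finset.card_filter]
    refine Finset.sum_congr rfl fun j _ => ?_
    simp only [Matrix.of_apply]
    by_cases h : blk i = blk j
    · rw [if_pos h, if_pos h.symm]
    · rw [if_neg h, if_neg (fun hh => h hh.symm)]
  calc (∑ i, ∑ j, (Matrix.of fun i j : Fin n => if blk i = blk j then 1 else 0) i j)
      = ∑ i, (Finset.univ.filter fun j => blk j = blk i).card :=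
        Finset.sum_congr rfl fun i _ => hinner i
    _ = ∑ c : Fin N, ∑ i ∈ Finset.univ.filter (fun i => blk i = c),
          (Finset.univ.filter fun j => blk j = blk i).card :=
        (Finset.sum_fiberwise_of_maps_to (fun i _ => Finset.mem_univ (blk i)) _).symm
    _ = ∑ c : Fin N, ((Finset.univ.filter fun i => blk i = c).card)^2 := by
        refine Finset.sum_congr rfl fun c _ => ?_
        rw [Finset.sum_congr rfl (fun i hi => by
          rw [(Finset.mem_filter.mp hi).2]), Finset.sum_const, smul_eq_mul, sq]

lemma card_filter_fin (n l r : ℕ) (hr : r ≤ n) :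
    (Finset.univ.filter fun i : Fin n => l ≤ i.1 ∧ i.1 < r).card = r - l := by
  have heq : (Finset.univ.filter fun i : Fin n => l ≤ i.1 ∧ i.1 < r)
      = Finset.attachFin (Finset.Ico l r)
          (fun m hm => lt_of_lt_of_le (Finset.mem_Ico.mp hm).2 hr) := by
    ext i
    simp [Finset.mem_attachFin, Finset.mem_Ico]
  rw [heq, Finset.card_attachFin, Nat.card_Ico]

lemma div_eq_iff_interval {q i t : ℕ} (hq : 0 < q) :
    i / q = t ↔ t * q ≤ i ∧ i < t * q + q := by
  constructor
  · intro h
    have hdm := Nat.div_add_mod i q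
    rw [h] at hdm
    have hcomm : q * t = t * q := Nat.mul_comm _ _
    rw [hcomm] at hdm
    obtain ⟨m, hm1, hm2⟩ : ∃ m, m < q ∧ t * q + m = i := ⟨i % q, Nat.mod_lt _ hq, hdm⟩
    omega
  · rintro ⟨h1, h2⟩
    refine Nat.div_eq_of_lt_le h1 ?_
    rw [Nat.succ_mul]
    omega

/-- The block-index function: `a` blocks of size `k+1` followed by `b` blocks of size `k`. -/
def blkf (k a : ℕ) (i : ℕ) : ℕ :=
  if i < a*(k+1) then i/(k+1) else a + (i - a*(k+1))/k

lemma blkf_lt (k a b : ℕ) (hk : 1 ≤ k) (i : ℕ) (hi : i < a*(k+1)+b*k) :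
    blkf k a i < a + b := by
  unfold blkf
  split
  · next h =>
    have h2 : i/(k+1) < a := (Nat.div_lt_iff_lt_mul (by omega)).mpr h
    omega
  · next h =>
    push_neg at h
    have h2 : (i - a*(k+1))/k < b := (Nat.div_lt_iff_lt_mul (by omega)).mpr (by omega)
    omega

def blkF (k a b : ℕ) (hk : 1 ≤ k) : Fin (a*(k+1)+b*k) → Fin (a+b) :=
  fun i => ⟨blkf k a i.1, blkf_lt k a b hk i.1 i.2⟩

lemma fiber_card (k a b : ℕ) (hk : 1 ≤ k) (c : Fin (a+b)) :
    (Finset.univ.filter fun i => blkF k a b hk i = c).card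
      = if c.1 < a then k+1 else k := by
  by_cases hc : c.1 < a
  · rw [if_pos hc]
    have heq : (Finset.univ.filter fun i => blkF k a b hk i = c)
        = Finset.univ.filter fun i : Fin (a*(k+1)+b*k) =>
            c.1*(k+1) ≤ i.1 ∧ i.1 < c.1*(k+1)+(k+1) := by
      apply Finset.filter_congr
      intro i _
      constructor
      · intro h
        have hv : blkf k a i.1 = c.1 := congrArg Fin.val h
        unfold blkf at hv
        by_cases hib : i.1 < a*(k+1)
        · rw [if_pos hib] at hv
          have := (div_eq_iff_interval (show 0 < k+1 by omega)).mp hv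
          omega
        · rw [if_neg hib] at hv
          have hge : a ≤ c.1 := hv ▸ Nat.le_add_right a _
          omega
      · rintro ⟨hl, hr⟩
        have hib : i.1 < a*(k+1) := by
          have h3 : (c.1+1) * (k+1) ≤ a*(k+1) := Nat.mul_le_mul_right _ (by omega)
          rw [Nat.succ_mul] at h3
          omega
        have hdiv : i.1/(k+1) = c.1 :=
          (div_eq_iff_interval (show 0 < k+1 by omega)).mpr ⟨hl, hr⟩
        apply Fin.ext
        show blkf k a i.1 = c.1
        unfold blkf
        rw [if_pos hib, hdiv]
    have hbnd : c.1*(k+1)+(k+1) ≤ a*(k+1)+b*k := by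
      have h3 : (c.1+1) * (k+1) ≤ a*(k+1) := Nat.mul_le_mul_right _ (by omega)
      rw [Nat.succ_mul] at h3
      omega
    rw [heq, card_filter_fin _ _ _ hbnd]
    omega
  · rw [if_neg hc]
    push_neg at hc
    have hcb : c.1 - a < b := by omega
    have heq : (Finset.univ.filter fun i => blkF k a b hk i = c)
        = Finset.univ.filter fun i : Fin (a*(k+1)+b*k) =>
            a*(k+1) + (c.1-a)*k ≤ i.1 ∧ i.1 < a*(k+1) + (c.1-a)*k + k := by
      apply Finset.filter_congr
      intro i _
      constructor
      · intro h
        have hv : blkf k a i.1 = c.1 := congrArg Fin.val h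
        unfold blkf at hv
        by_cases hib : i.1 < a*(k+1)
        · rw [if_pos hib] at hv
          have h2 : i.1/(k+1) < a := (Nat.div_lt_iff_lt_mul (by omega)).mpr hib
          omega
        · rw [if_neg hib] at hv
          push_neg at hib
          have hdiv : (i.1 - a*(k+1))/k = c.1 - a := by omega
          have := (div_eq_iff_interval (show 0 < k by omega)).mp hdiv
          omega
      · rintro ⟨hl, hr⟩
        have hib : ¬ (i.1 < a*(k+1)) := by omega
        have hdiv : (i.1 - a*(k+1))/k = c.1 - a :=
          (div_eq_iff_interval (show 0 < k by omega)).mpr ⟨by omega, by omega⟩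
        apply Fin.ext
        show blkf k a i.1 = c.1
        unfold blkf
        rw [if_neg hib, hdiv]
        omega
    have hbnd : a*(k+1) + (c.1-a)*k + k ≤ a*(k+1)+b*k := by
      have h3 : (c.1-a+1) * k ≤ b*k := Nat.mul_le_mul_right _ (by omega)
      rw [Nat.succ_mul] at h3
      omega
    rw [heq, card_filter_fin _ _ _ hbnd]
    omega

lemma card_lt_a (a b : ℕ) : (Finset.univ.filter fun c : Fin (a+b) => c.1 < a).card = a := by
  have heq : (Finset.univ.filter fun c : Fin (a+b) => c.1 < a)
      = Finset.univ.filter fun c : Fin (a+b) => 0 ≤ c.1 ∧ c.1 < a := by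
    apply Finset.filter_congr
    intro c _
    simp
  rw [heq, card_filter_fin _ _ _ (by omega)]
  omega

lemma prod_fiber_fac (k a b : ℕ) :
    (∏ c : Fin (a+b), (if c.1 < a then k+1 else k).factorial)
      = (k+1).factorial ^ a * k.factorial ^ b := by
  rw [← Finset.prod_filter_mul_prod_filter_not Finset.univ (fun c : Fin (a+b) => c.1 < a)]
  have h1 : ∏ c ∈ Finset.univ.filter (fun c : Fin (a+b) => c.1 < a),
      (if c.1 < a then k+1 else k).factorial = (k+1).factorial ^ a := by
    rw [Finset.prod_congr rfl (fun c hc => by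
      rw [if_pos (Finset.mem_filter.mp hc).2]), Finset.prod_const, card_lt_a]
  have h2 : ∏ c ∈ Finset.univ.filter (fun c : Fin (a+b) => ¬ c.1 < a),
      (if c.1 < a then k+1 else k).factorial = k.factorial ^ b := by
    rw [Finset.prod_congr rfl (fun c hc => by
      rw [if_neg (Finset.mem_filter.mp hc).2]), Finset.prod_const]
    congr 1
    have htot := Finset.card_filter_add_card_filter_not
      (s := (Finset.univ : Finset (Fin (a+b)))) (fun c => c.1 < a)
    rw [Finset.card_univ, Fintype.card_fin, card_lt_a] at htot
    omega
  rw [h1, h2]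

lemma sum_fiber_sq (k a b : ℕ) :
    (∑ c : Fin (a+b), (if c.1 < a then k+1 else k)^2) = a*(k+1)^2 + b*k^2 := by
  rw [← Finset.sum_filter_add_sum_filter_not Finset.univ (fun c : Fin (a+b) => c.1 < a)]
  have h1 : ∑ c ∈ Finset.univ.filter (fun c : Fin (a+b) => c.1 < a),
      (if c.1 < a then k+1 else k)^2 = a*(k+1)^2 := by
    rw [Finset.sum_congr rfl (fun c hc => by
      rw [if_pos (Finset.mem_filter.mp hc).2]), Finset.sum_const, card_lt_a, smul_eq_mul]
  have h2 : ∑ c ∈ Finset.univ.filter (fun c : Fin (a+b) => ¬ c.1 < a),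
      (if c.1 < a then k+1 else k)^2 = b*k^2 := by
    rw [Finset.sum_congr rfl (fun c hc => by
      rw [if_neg (Finset.mem_filter.mp hc).2]), Finset.sum_const, smul_eq_mul]
    have htot := Finset.card_filter_add_card_filter_not
      (s := (Finset.univ : Finset (Fin (a+b)))) (fun c => c.1 < a)
    rw [Finset.card_univ, Fintype.card_fin, card_lt_a] at htot
    have hcb : (Finset.univ.filter (fun c : Fin (a+b) => ¬ c.1 < a)).card = b := by omega
    rw [hcb]
  rw [h1, h2]

theorem stmt0 (n k τ σ : ℕ) (hn : 3 ≤ n) (hk : 1 ≤ k) (hτ : τ ≤ n ^ 2)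
    (hσ : σ = n ^ 2 - τ)
    (h1 : k * n ≤ σ) (h2 : σ ≤ (k + 1) * n)
    (h3 : (k + 1) ∣ σ - k * n) (h4 : k ∣ (k + 1) * n - σ) :
    mu n τ = (Nat.factorial (k + 1)) ^ ((σ - k * n) / (k + 1)) *
      (Nat.factorial k) ^ (((k + 1) * n - σ) / k) := by
  obtain ⟨a, ha⟩ := h3
  obtain ⟨b, hb⟩ := h4
  have hea : (σ - k*n) / (k+1) = a := by
    rw [ha]
    exact Nat.mul_div_cancel_left a (by omega)
  have heb : ((k+1)*n - σ) / k = b := by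
    rw [hb]
    exact Nat.mul_div_cancel_left b (by omega)
  rw [hea, heb]
  have hPA : σ - k*n = a*(k+1) := by rw [ha]; ring
  have hPB : (k+1)*n - σ = b*k := by rw [hb]; ring
  have hn' : n = a*(k+1) + b*k := by
    have h6 := h2
    rw [show (k+1)*n = k*n + n by ring] at h6 hPB
    set A := k*n with hA
    set PA := a*(k+1) with hPAdef
    set PB := b*k with hPBdef
    omega
  subst hn'
  have hσsplit : σ = k*(a*(k+1)+b*k) + a*(k+1) := by
    set A := k*(a*(k+1)+b*k) with hA
    set PA := a*(k+1) with hPAdef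
    omega
  set M0 := Matrix.of fun i j : Fin (a*(k+1)+b*k) =>
    if blkF k a b hk i = blkF k a b hk j then 1 else 0 with hM0
  have h01 : IsZeroOne M0 := by
    intro i j
    simp only [hM0, Matrix.of_apply]
    split <;> simp
  have hperm : perm M0 = (k+1).factorial ^ a * k.factorial ^ b := by
    rw [hM0, perm_blockMatrix (blkF k a b hk)]
    rw [Finset.prod_congr rfl (fun c _ => by rw [fiber_card k a b hk c])]
    exact prod_fiber_fac k a b
  have hones : (∑ i, ∑ j, M0 i j) = σ := by
    rw [hM0, ones_blockMatrix (blkF k a b hk)]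
    rw [Finset.sum_congr rfl (fun c _ => by rw [fiber_card k a b hk c])]
    rw [sum_fiber_sq k a b]
    rw [show a*(k+1)^2 + b*k^2 = k*(a*(k+1)+b*k) + a*(k+1) by ring]
    omega
  have hzc : zeroCount M0 = τ := by
    have hoz := ones_add_zeroCount M0 h01
    rw [hones] at hoz
    set SQ := (a*(k+1)+b*k)^2 with hSQ
    omega
  have hmem : M0 ∈ Uclass (a*(k+1)+b*k) τ := ⟨h01, hzc⟩
  have hub : ∀ M ∈ Uclass (a*(k+1)+b*k) τ,
      perm M ≤ (k+1).factorial ^ a * k.factorial ^ b := by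
    intro M hM
    obtain ⟨h01M, hzcM⟩ := hM
    have honesM : (∑ i, ∑ j, M i j) = σ := by
      have hoz := ones_add_zeroCount M h01M
      rw [hzcM] at hoz
      set SQ := (a*(k+1)+b*k)^2 with hSQ
      omega
    refine perm_le_bound hk (p := a*(k+1)) (Nat.le_add_right _ _) M h01M ?_ (a := a) (b := b)
      (by ring) ?_
    · rw [honesM, hσsplit]
    · rw [Nat.add_sub_cancel_left, Nat.mul_comm]
  have hub' : ∀ x ∈ perm '' Uclass (a*(k+1)+b*k) τ,
      x ≤ (k+1).factorial ^ a * k.factorial ^ b := by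
    rintro x ⟨M, hM, rfl⟩
    exact hub M hM
  show sSup (perm '' Uclass (a*(k+1)+b*k) τ) = _
  apply le_antisymm
  · exact csSup_le ⟨perm M0, ⟨M0, hmem, rfl⟩⟩ hub'
  · exact le_csSup ⟨(k+1).factorial ^ a * k.factorial ^ b, fun x hx => hub' x hx⟩
      ⟨M0, hmem, hperm⟩

end BGM
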